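/- Let S be a finite set of points in the Euclidean plane and let T be a Euclidean minimum spanning tree of S, i.e., a connected acyclic graph on vertex set S whose sum of Euclidean edge lengths is minimal among all spanning trees of S. Then every edge of T is an edge of the relative neighbourhood graph RNG(S); that is, MST(S) ⊆ RNG(S). -/

import Mathlib

/-- The Euclidean length of an (unordered) edge on points of the plane. -/
noncomputable def edgeLength {S : Finset (EuclideanSpace ℝ (Fin 2))} :
    Sym2 {x // x ∈ S} → ℝ :=
  Sym2.lift ⟨fun a b => dist (a : EuclideanSpace ℝ (Fin 2)) (b : EuclideanSpace ℝ (Fin 2)),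
    fun _ _ => dist_comm _ _⟩

open SimpleGraph

private lemma reach_or' {V : Type*} {T : SimpleGraph V} {a b : V} {v t : V}
    (w : T.Walk v t) (ht : t = a ∨ t = b) :
    (T \ fromEdgeSet {s(a, b)}).Reachable v a ∨
      (T \ fromEdgeSet {s(a, b)}).Reachable v b := by
  induction w with
  | nil =>
    rcases ht with rfl | rfl
    · exact Or.inl (Reachable.refl _)
    · exact Or.inr (Reachable.refl _)
  | @cons u x _ h p ih =>
    by_cases hf : s(u, x) = s(a, b)
    · rw [Sym2.eq_iff] at hf
      rcases hf with ⟨h1, -⟩ | ⟨h1, -⟩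
      · exact Or.inl (h1 ▸ Reachable.refl _)
      · exact Or.inr (h1 ▸ Reachable.refl _)
    · have hadj : (T \ fromEdgeSet {s(a, b)}).Adj u x := by
        rw [sdiff_adj, fromEdgeSet_adj]
        exact ⟨h, fun hh => hf (Set.mem_singleton_iff.mp hh.1)⟩
      exact (ih ht).imp hadj.reachable.trans hadj.reachable.trans

private lemma reach_or {V : Type*} {T : SimpleGraph V} {a b v : V}
    (w : T.Walk v a) :
    (T \ fromEdgeSet {s(a, b)}).Reachable v a ∨
      (T \ fromEdgeSet {s(a, b)}).Reachable v b :=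
  reach_or' w (Or.inl rfl)

private lemma swap_tree {V : Type*} {T : SimpleGraph V} (hT : T.IsTree) {a b x y : V}
    (hadj : T.Adj a b)
    (hx : (T \ fromEdgeSet {s(a, b)}).Reachable x a)
    (hy : (T \ fromEdgeSet {s(a, b)}).Reachable y b)
    (hxy : x ≠ y) :
    ∃ T' : SimpleGraph V, T'.IsTree ∧
      T'.edgeSet = (T.edgeSet \ {s(a, b)}) ∪ {s(x, y)} := by
  classical
  set G := T \ fromEdgeSet {s(a, b)} with hG
  have hGle : G ≤ T := sdiff_le
  have hbridge : ¬ G.Reachable a b :=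
    isBridge_iff.mp (isAcyclic_iff_forall_adj_isBridge.mp hT.IsAcyclic hadj)
  have hGedge : G.edgeSet = T.edgeSet \ {s(a, b)} := by
    rw [hG, edgeSet_sdiff, edgeSet_fromEdgeSet]
    rw [Set.diff_diff_right]
    have : T.edgeSet ∩ {e : Sym2 V | e.IsDiag} = ∅ := by
      ext e
      simp only [Set.mem_inter_iff, Set.mem_setOf_eq, Set.mem_empty_iff_false, iff_false,
        not_and]
      intro he
      exact fun hd => (T.not_isDiag_of_mem_edgeSet he) hd
    rw [show T.edgeSet ∩ Sym2.diagSet = ∅ from this, Set.union_empty]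
  -- the new graph
  set T' : SimpleGraph V := G ⊔ fromEdgeSet {s(x, y)} with hT'
  have hxyadj : T'.Adj x y := by
    refine Or.inr ?_
    rw [fromEdgeSet_adj]
    exact ⟨rfl, hxy⟩
  have hGleT' : G ≤ T' := le_sup_left
  -- edge set of T'
  have hT'edge : T'.edgeSet = (T.edgeSet \ {s(a, b)}) ∪ {s(x, y)} := by
    rw [hT', edgeSet_sup, hGedge, edgeSet_fromEdgeSet]
    congr 1
    ext e
    simp only [Set.mem_diff, Set.mem_singleton_iff, Set.mem_setOf_eq]
    constructor
    · rintro ⟨rfl, -⟩; rfl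
    · rintro rfl
      exact ⟨rfl, by simpa using hxy⟩
  have hne : Nonempty V := hT.isConnected.nonempty
  refine ⟨T', ⟨?_, ?_⟩, hT'edge⟩
  · -- connected
    have hx' : T'.Reachable x a := hx.mono hGleT'
    have hy' : T'.Reachable y b := hy.mono hGleT'
    have hba : T'.Reachable b a := (hy'.symm.trans hxyadj.symm.reachable).trans hx'
    have key : ∀ w : V, T'.Reachable w a := by
      intro w
      obtain ⟨p⟩ := hT.isConnected w a
      rcases reach_or (b := b) p with h | h
      · exact h.mono hGleT'
      · exact (h.mono hGleT').trans hba
    exact ⟨fun u v => (key u).trans (key v).symm⟩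
  · -- acyclic
    intro v c hc
    by_cases hf : s(x, y) ∈ c.edges
    · -- cycle through the new edge gives reachability of x,y avoiding that edge
      have : T'.Adj x y ∧ (T' \ fromEdgeSet {s(x, y)}).Reachable x y :=
        (adj_and_reachable_delete_edges_iff_exists_cycle).mpr ⟨v, c, hc, hf⟩
      have hle : (T' \ fromEdgeSet {s(x, y)}) ≤ G := by
        intro u w hw
        rw [hT'] at hw
        simp only [sdiff_adj, sup_adj, fromEdgeSet_adj, Set.mem_singleton_iff] at hw
        rcases hw with ⟨h | h, hne⟩
        · exact h
        · exact absurd ⟨h.1, h.2⟩ hne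
      have hxyG : G.Reachable x y := this.2.mono hle
      exact hbridge ((hx.symm.trans hxyG).trans hy)
    · -- cycle avoiding the new edge lives in G hence in T, contradiction
      have hsub : ∀ e ∈ c.edges, e ∈ G.edgeSet := by
        intro e he
        have : e ∈ T'.edgeSet := c.edges_subset_edgeSet he
        rw [hT', edgeSet_sup, edgeSet_fromEdgeSet] at this
        rcases this with h | h
        · exact h
        · obtain ⟨h1, -⟩ := h
          rw [Set.mem_singleton_iff] at h1
          exact absurd (h1 ▸ he) hf
      have hsub' : ∀ e ∈ c.edges, e ∈ T.edgeSet := fun e he =>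
        (edgeSet_mono hGle) (hsub e he)
      exact hT.IsAcyclic (c.transfer T hsub') (hc.transfer hsub')

private lemma no_better
    (S : Finset (EuclideanSpace ℝ (Fin 2)))
    (T : SimpleGraph {x // x ∈ S})
    (hT : T.IsTree)
    (hmin : ∀ T' : SimpleGraph {x // x ∈ S}, T'.IsTree →
      (∑ᶠ e ∈ T.edgeSet, edgeLength e) ≤ ∑ᶠ e ∈ T'.edgeSet, edgeLength e)
    {a b x y : {x // x ∈ S}} (hadj : T.Adj a b)
    (hx : (T \ fromEdgeSet {s(a, b)}).Reachable x a)
    (hy : (T \ fromEdgeSet {s(a, b)}).Reachable y b)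
    (hxy : x ≠ y)
    (hlt : dist (x : EuclideanSpace ℝ (Fin 2)) (y : EuclideanSpace ℝ (Fin 2)) <
      dist (a : EuclideanSpace ℝ (Fin 2)) (b : EuclideanSpace ℝ (Fin 2))) : False := by
  classical
  obtain ⟨T', hT'tree, hT'edge⟩ := swap_tree hT hadj hx hy hxy
  have hbridge : ¬ (T \ fromEdgeSet {s(a, b)}).Reachable a b :=
    isBridge_iff.mp (isAcyclic_iff_forall_adj_isBridge.mp hT.IsAcyclic hadj)
  have hfE : s(x, y) ∉ T.edgeSet \ {s(a, b)} := by
    rintro ⟨hmem, hne⟩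
    have : (T \ fromEdgeSet {s(a, b)}).Adj x y := by
      rw [sdiff_adj, fromEdgeSet_adj]
      exact ⟨hmem, fun hh => hne hh.1⟩
    exact hbridge ((hx.symm.trans this.reachable).trans hy)
  have heE : s(a, b) ∈ T.edgeSet := hadj
  have hsplit : T.edgeSet = (T.edgeSet \ {s(a, b)}) ∪ {s(a, b)} := by
    rw [Set.diff_union_of_subset (Set.singleton_subset_iff.mpr heE)]
  have hd1 : Disjoint (T.edgeSet \ {s(a, b)}) ({s(a, b)} : Set (Sym2 {x // x ∈ S})) := by
    simp [Set.disjoint_singleton_right]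
  have hd2 : Disjoint (T.edgeSet \ {s(a, b)}) ({s(x, y)} : Set (Sym2 {x // x ∈ S})) := by
    simpa [Set.disjoint_singleton_right] using hfE
  have hsum1 : (∑ᶠ e ∈ T.edgeSet, edgeLength e) =
      (∑ᶠ e ∈ T.edgeSet \ {s(a, b)}, edgeLength e) + edgeLength s(a, b) := by
    conv_lhs => rw [hsplit]
    rw [finsum_mem_union hd1 (Set.toFinite _) (Set.toFinite _), finsum_mem_singleton]
  have hsum2 : (∑ᶠ e ∈ T'.edgeSet, edgeLength e) =
      (∑ᶠ e ∈ T.edgeSet \ {s(a, b)}, edgeLength e) + edgeLength s(x, y) := by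
    rw [hT'edge, finsum_mem_union hd2 (Set.toFinite _) (Set.toFinite _), finsum_mem_singleton]
  have hle := hmin T' hT'tree
  rw [hsum1, hsum2] at hle
  have h1 : edgeLength (S := S) s(a, b) = dist (a : EuclideanSpace ℝ (Fin 2)) b := rfl
  have h2 : edgeLength (S := S) s(x, y) = dist (x : EuclideanSpace ℝ (Fin 2)) y := rfl
  rw [h1, h2] at hle
  linarith

/-- Every edge of a Euclidean minimum spanning tree of a finite set `S` of points in the
plane is an edge of the relative neighbourhood graph of `S`: `MST(S) ⊆ RNG(S)`. -/
theorem mst_subset_rng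
    (S : Finset (EuclideanSpace ℝ (Fin 2)))
    (T : SimpleGraph {x // x ∈ S})
    (hT : T.IsTree)
    (hmin : ∀ T' : SimpleGraph {x // x ∈ S}, T'.IsTree →
      (∑ᶠ e ∈ T.edgeSet, edgeLength e) ≤ ∑ᶠ e ∈ T'.edgeSet, edgeLength e)
    (a b : {x // x ∈ S}) (hadj : T.Adj a b) :
    ∀ c ∈ S, c ≠ (a : EuclideanSpace ℝ (Fin 2)) → c ≠ (b : EuclideanSpace ℝ (Fin 2)) →
      ¬ (dist c (a : EuclideanSpace ℝ (Fin 2)) < dist (a : EuclideanSpace ℝ (Fin 2)) b ∧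
         dist c (b : EuclideanSpace ℝ (Fin 2)) < dist (a : EuclideanSpace ℝ (Fin 2)) b) := by
  intro c hcS hca hcb ⟨hda, hdb⟩
  set c' : {x // x ∈ S} := ⟨c, hcS⟩ with hc'
  have hc'a : c' ≠ a := fun h => hca (congrArg Subtype.val h)
  have hc'b : c' ≠ b := fun h => hcb (congrArg Subtype.val h)
  obtain ⟨p⟩ := hT.isConnected c' a
  rcases reach_or (b := b) p with h | h
  · exact no_better S T hT hmin hadj h (Reachable.refl b) hc'b hdb
  · have hadj' : T.Adj b a := hadj.symm
    have hswap : s(b, a) = s(a, b) := Sym2.eq_swap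
    refine no_better S T hT hmin hadj' (x := c') (y := a) ?_ ?_ hc'a ?_
    · rw [hswap]; exact h
    · exact Reachable.refl a
    · rw [dist_comm (b : EuclideanSpace ℝ (Fin 2))]; exact hda
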